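/- arXiv:1503.07555 — 2 statements merged into one kernel-verified Lean document; each statement's English description precedes it below -/
import Mathlib

section
/- Let 1 < β < e and α = β^(1/β), and let f(x) = α^x. Then for every x with 0 < x < β, the sequence of iterates f^∘n(x) is strictly increasing and converges to β as n → ∞. -/
open Real Filter

theorem stmt_1 (β : ℝ) (hβ1 : 1 < β) (hβe : β < Real.exp 1)
    (α : ℝ) (hα : α = β ^ (1 / β))
    (f : ℝ → ℝ) (hf : ∀ x : ℝ, f x = α ^ x) :
    ∀ x : ℝ, 0 < x → x < β →
      StrictMono (fun n : ℕ => f^[n] x) ∧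
      Tendsto (fun n : ℕ => f^[n] x) atTop (nhds β) := by
  have hβ0 : (0:ℝ) < β := lt_trans one_pos hβ1
  have hc0 : 0 < Real.log β := Real.log_pos hβ1
  have hc1 : Real.log β < 1 := (Real.log_lt_iff_lt_exp hβ0).mpr (by simpa using hβe)
  have hα0 : 0 < α := by rw [hα]; exact Real.rpow_pos_of_pos hβ0 _
  have hfexp : ∀ t, f t = Real.exp (Real.log β / β * t) := by
    intro t
    rw [hf, Real.rpow_def_of_pos hα0, hα, Real.log_rpow hβ0]
    ring_nf
  have hfβ : f β = β := by
    rw [hfexp, div_mul_cancel₀ _ (ne_of_gt hβ0), Real.exp_log hβ0]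
  have hfmono : StrictMono f := by
    intro a b hab
    rw [hfexp, hfexp]
    apply Real.exp_lt_exp.mpr
    have : 0 < Real.log β / β := by positivity
    nlinarith
  have key : ∀ y : ℝ, 0 < y → y < β → y < f y := by
    intro y hy0 hyβ
    rw [hfexp, ← Real.exp_log hy0]
    apply Real.exp_lt_exp.mpr
    have hu : Real.log y = Real.log (y / β) + Real.log β := by
      rw [Real.log_div (ne_of_gt hy0) (ne_of_gt hβ0)]; ring
    have h1 : Real.log (y/β) < y/β - 1 := by
      apply Real.log_lt_sub_one_of_pos (by positivity)
      intro h
      have : y = β := by field_simp at h; linarith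
      linarith
    have hub : y / β < 1 := (div_lt_one hβ0).mpr hyβ
    have h2 : (y/β - 1) < (y/β - 1) * Real.log β := by nlinarith
    have : Real.log y < (y/β) * Real.log β := by nlinarith
    calc Real.log y < y/β * Real.log β := this
      _ = Real.log β / β * (Real.exp (Real.log y)) := by
          rw [Real.exp_log hy0]; ring
  intro x hx0 hxβ
  set s : ℕ → ℝ := fun n => f^[n] x with hs
  have hsucc : ∀ n, s (n+1) = f (s n) := fun n => Function.iterate_succ_apply' f n x
  have hbounds : ∀ n, 0 < s n ∧ s n < β := by
    intro n
    induction n with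
    | zero => exact ⟨hx0, hxβ⟩
    | succ n ih =>
      refine ⟨?_, ?_⟩
      · rw [hsucc]; exact lt_trans ih.1 (key _ ih.1 ih.2)
      · rw [hsucc, ← hfβ]; exact hfmono ih.2
  have hmono : StrictMono s := by
    apply strictMono_nat_of_lt_succ
    intro n
    rw [hsucc]
    exact key _ (hbounds n).1 (hbounds n).2
  refine ⟨hmono, ?_⟩
  have hbdd : BddAbove (Set.range s) := by
    refine ⟨β, ?_⟩
    rintro _ ⟨n, rfl⟩
    exact le_of_lt (hbounds n).2
  have htend : Tendsto s atTop (nhds (⨆ n, s n)) :=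
    tendsto_atTop_ciSup hmono.monotone hbdd
  set L := ⨆ n, s n with hL
  have hLβ : L ≤ β := ciSup_le fun n => le_of_lt (hbounds n).2
  have hL0 : 0 < L := lt_of_lt_of_le (hbounds 0).1 (le_ciSup hbdd 0)
  have hfcont : Continuous f := by
    have : f = fun t => Real.exp (Real.log β / β * t) := funext hfexp
    rw [this]
    exact Real.continuous_exp.comp (continuous_const.mul continuous_id)
  have hfix : f L = L := by
    have h1 : Tendsto (fun n => s (n+1)) atTop (nhds L) :=
      htend.comp (tendsto_add_atTop_nat 1)
    have h2 : Tendsto (fun n => f (s n)) atTop (nhds (f L)) :=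
      (hfcont.tendsto L).comp htend
    have he : (fun n => s (n+1)) = fun n => f (s n) := funext hsucc
    rw [he] at h1
    exact tendsto_nhds_unique h2 h1
  have hLb : L = β := by
    rcases lt_or_eq_of_le hLβ with h | h
    · exact absurd hfix (ne_of_gt (key L hL0 h))
    · exact h
  rwa [hLb] at htend
end

section
/- Let 1 < β < e, α = β^(1/β), and f(x) = α^x. Then for all x ∈ (0, β), f(x) > x, and f maps the interval (0, β) into itself. -/
open Real Set

theorem stmt_2 (β : ℝ) (hβ1 : 1 < β) (hβe : β < Real.exp 1)
    (α : ℝ) (hα : α = β ^ (1 / β))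
    (f : ℝ → ℝ) (hf : ∀ x : ℝ, f x = α ^ x) :
    ∀ x ∈ Set.Ioo (0 : ℝ) β, x < f x ∧ f x ∈ Set.Ioo (0 : ℝ) β := by
  intro x hx
  obtain ⟨hx0, hxβ⟩ := hx
  have hβ0 : (0:ℝ) < β := lt_trans one_pos hβ1
  have hlog0 : 0 < Real.log β := Real.log_pos hβ1
  have hlog1 : Real.log β < 1 := by
    have := Real.log_lt_log hβ0 hβe
    simpa using this
  have hα0 : 0 < α := by
    rw [hα]; exact Real.rpow_pos_of_pos hβ0 _
  have hlogα : Real.log α = (1 / β) * Real.log β := by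
    rw [hα, Real.log_rpow hβ0]
  have hfx : f x = Real.exp (x / β * Real.log β) := by
    rw [hf, Real.rpow_def_of_pos hα0, hlogα]
    ring_nf
  have ht1 : x / β < 1 := (div_lt_one hβ0).mpr hxβ
  have ht0 : 0 < x / β := div_pos hx0 hβ0
  constructor
  · -- x < f x
    have key : (x / β - 1) * Real.log β > x / β - 1 := by nlinarith
    have h1 : x / β ≤ Real.exp (x / β - 1) := by
      nlinarith [Real.add_one_le_exp (x / β - 1)]
    have h2 : Real.exp ((x / β - 1) * Real.log β) > x / β :=
      lt_of_le_of_lt h1 (Real.exp_lt_exp.mpr key)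
    have h3 : Real.exp (x / β * Real.log β) =
        β * Real.exp ((x / β - 1) * Real.log β) := by
      rw [← Real.exp_log hβ0, ← Real.exp_add, Real.exp_log hβ0]
      ring_nf
    rw [hfx, h3]
    calc x = β * (x / β) := by field_simp
    _ < β * Real.exp ((x / β - 1) * Real.log β) := by
        exact (mul_lt_mul_iff_right₀ hβ0).mpr h2
  · constructor
    · rw [hfx]; exact Real.exp_pos _
    · rw [hfx]
      calc Real.exp (x / β * Real.log β) < Real.exp (Real.log β) := by
            apply Real.exp_lt_exp.mpr; nlinarith
      _ = β := Real.exp_log hβ0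
end
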